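/- arXiv:2011.12078 — 2 statements merged into one kernel-verified Lean document; each statement's English description precedes it below -/
import Mathlib

section
/- Let k be a complete non-archimedean field and Q ∈ k[T] a monic polynomial all of whose roots (in an algebraic closure) have absolute value strictly greater than 1. Then 1/Q belongs to the Tate algebra k{T}, i.e., 1/Q is given by a power series Σ a_n T^n with |a_n| → 0. -/
open Filter

lemma aux_norm_multiset_prod {L : Type*} [NormedField L] (m : Multiset L) :
    ‖m.prod‖ = (m.map (fun z => ‖z‖)).prod := by
  induction m using Multiset.induction_on with
  | empty => simp
  | cons a s ih => simp [norm_mul, ih]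

lemma aux_one_le_prod (m : Multiset ℝ) (h : ∀ x ∈ m, 1 ≤ x) : 1 ≤ m.prod := by
  induction m using Multiset.induction_on with
  | empty => simp
  | cons a s ih =>
      simp only [Multiset.prod_cons]
      have ha := h a (by simp)
      have hs := ih (fun x hx => h x (by simp [hx]))
      nlinarith

lemma aux_one_lt_prod (m : Multiset ℝ) (h : ∀ x ∈ m, 1 < x) (h0 : m ≠ 0) :
    1 < m.prod := by
  obtain ⟨a, ha⟩ := Multiset.exists_mem_of_ne_zero h0
  obtain ⟨s, rfl⟩ := Multiset.exists_cons_of_mem ha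
  rw [Multiset.prod_cons]
  have ha := h a (by simp)
  have hs := aux_one_le_prod s (fun x hx => (h x (by simp [hx])).le)
  nlinarith

/-- Let `k` be a complete non-archimedean field and `Q` a monic
polynomial all of whose roots in an algebraically closed extension `L` (with an
absolute value extending that of `k`) have absolute value strictly greater
than `1`. Then `1/Q` lies in the Tate algebra `k{T}`: there is a power series
`Σ a_n T^n` with `‖a_n‖ → 0` which is inverse to `Q`. -/
theorem stmt2 {k L : Type*} [NontriviallyNormedField k] [CompleteSpace k]
    [NormedField L] [Algebra k L] [IsAlgClosure k L]
    (hna : IsNonarchimedean (fun x : k => ‖x‖))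
    (hext : ∀ x : k, ‖algebraMap k L x‖ = ‖x‖)
    (Q : Polynomial k) (hmonic : Q.Monic)
    (hroots : ∀ z : L, (Q.map (algebraMap k L)).IsRoot z → 1 < ‖z‖) :
    ∃ a : ℕ → k,
      Tendsto (fun n => ‖a n‖) atTop (nhds 0) ∧
      (Q : PowerSeries k) * PowerSeries.mk a = 1 := by
  haveI : IsUltrametricDist k :=
    IsUltrametricDist.isUltrametricDist_of_isNonarchimedean_norm hna
  haveI : IsUltrametricDist L := by
    apply IsUltrametricDist.isUltrametricDist_of_forall_norm_natCast_le_one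
    intro n
    rw [show ((n : L)) = algebraMap k L (n : k) by rw [map_natCast], hext]
    exact IsUltrametricDist.norm_natCast_le_one k n
  set f := algebraMap k L with hf
  set P := Q.map f with hP
  have hPmonic : P.Monic := hmonic.map f
  set d := Q.natDegree with hd
  have hPdeg : P.natDegree = d := by
    rw [hP, Polynomial.natDegree_map_eq_of_injective (algebraMap k L).injective]
  haveI : IsAlgClosed L := IsAlgClosure.isAlgClosed k
  have hsplits : P.Splits := IsAlgClosed.splits P
  set m := P.roots with hm
  have hcard : Multiset.card m = d := (Polynomial.splits_iff_card_roots.mp hsplits).trans hPdeg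
  have hm1 : ∀ z ∈ m, 1 < ‖z‖ := fun z hz => hroots z (Polynomial.isRoot_of_mem_roots hz)
  have hnormcoeff : ∀ i, ‖Q.coeff i‖ = ‖P.coeff i‖ := by
    intro i
    rw [hP, Polynomial.coeff_map, hext]
  -- norm of constant coefficient
  have hq0norm : ‖Q.coeff 0‖ = (m.map (fun z => ‖z‖)).prod := by
    rw [hnormcoeff,
      hsplits.coeff_zero_eq_prod_roots_of_monic hPmonic]
    rw [norm_mul, norm_pow, norm_neg, norm_one, one_pow, one_mul, aux_norm_multiset_prod]
  have hq0_gt : ∀ t : Multiset L, t ≤ m → t ≠ m → (t.map (fun z => ‖z‖)).prod < ‖Q.coeff 0‖ := by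
    classical
    intro t ht htne
    have hsub : t + (m - t) = m := by
      rw [add_comm]; exact tsub_add_cancel_of_le ht
    have hmt0 : m - t ≠ 0 := by
      intro h
      rw [h, add_zero] at hsub
      exact htne hsub
    have ht1 : (1 : ℝ) ≤ (t.map (fun z => ‖z‖)).prod := by
      apply aux_one_le_prod
      intro x hx
      obtain ⟨z, hz, rfl⟩ := Multiset.mem_map.mp hx
      exact (hm1 z (Multiset.mem_of_le ht hz)).le
    have hmt1 : (1 : ℝ) < ((m - t).map (fun z => ‖z‖)).prod := by
      apply aux_one_lt_prod
      · intro x hx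
        obtain ⟨z, hz, rfl⟩ := Multiset.mem_map.mp hx
        exact hm1 z (Multiset.mem_of_le (Multiset.sub_le_self m t) hz)
      · intro h
        exact hmt0 (Multiset.map_eq_zero.mp h)
    rw [hq0norm, ← hsub, Multiset.map_add, Multiset.prod_add]
    exact lt_mul_of_one_lt_right (lt_of_lt_of_le one_pos ht1) hmt1
  have hkey : ∀ i, 1 ≤ i → i ≤ d → ‖Q.coeff i‖ < ‖Q.coeff 0‖ := by
    intro i hi1 hid
    have hicard : i ≤ Multiset.card m := by rw [hcard]; exact hid
    have hcoeff : P.coeff i = (-1) ^ (Multiset.card m - i) * m.esymm (Multiset.card m - i) := by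
      conv_lhs => rw [hsplits.eq_prod_roots_of_monic hPmonic]
      exact Multiset.prod_X_sub_C_coeff m hicard
    rw [hnormcoeff, hcoeff, norm_mul, norm_pow, norm_neg, norm_one, one_pow, one_mul]
    -- esymm is a multiset sum of products over powersetCard
    obtain ⟨t, htmem, htle⟩ :=
      IsUltrametricDist.exists_norm_multiset_sum_le
        (m.powersetCard (Multiset.card m - i)) (f := Multiset.prod)
    have hpne : m.powersetCard (Multiset.card m - i) ≠ 0 := by
      intro h
      have h2 := Multiset.card_powersetCard (Multiset.card m - i) m
      rw [h] at h2
      simp only [Multiset.card_zero] at h2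
      exact (Nat.choose_pos (Nat.sub_le _ _)).ne' h2.symm
    have htmem' := htmem hpne
    rw [Multiset.mem_powersetCard] at htmem'
    have htne : t ≠ m := by
      intro h
      have := htmem'.2
      rw [h] at this
      omega
    calc ‖m.esymm (Multiset.card m - i)‖ ≤ ‖t.prod‖ := htle
      _ = (t.map (fun z => ‖z‖)).prod := aux_norm_multiset_prod t
      _ < ‖Q.coeff 0‖ := hq0_gt t htmem'.1 htne
  have hq0 : Q.coeff 0 ≠ 0 := by
    intro h
    have h0 : P.IsRoot 0 := by
      simp [Polynomial.IsRoot, Polynomial.eval_zero, ← Polynomial.coeff_zero_eq_eval_zero,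
        hP, Polynomial.coeff_map, h]
    have := hroots 0 h0
    rw [norm_zero] at this
    linarith
  have hq0pos : 0 < ‖Q.coeff 0‖ := norm_pos_iff.mpr hq0
  -- choose the radius r
  set x : ℕ → ℝ := fun i => ‖Q.coeff i‖ / ‖Q.coeff 0‖ with hx
  have hxnonneg : ∀ i, 0 ≤ x i := fun i => div_nonneg (norm_nonneg _) (norm_nonneg _)
  have hxlt : ∀ i ∈ Finset.Icc 1 d, x i < 1 := by
    intro i hi
    rw [Finset.mem_Icc] at hi
    exact (div_lt_one hq0pos).mpr (hkey i hi.1 hi.2)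
  set F : ℕ → ℝ := fun i => (x i) ^ ((i : ℝ)⁻¹) with hF
  set S : Finset ℝ := insert (1/2 : ℝ) ((Finset.Icc 1 d).image F) with hS
  have hSne : S.Nonempty := ⟨1/2, Finset.mem_insert_self _ _⟩
  set r : ℝ := S.max' hSne with hr
  have hr_lt1 : r < 1 := by
    rw [hr, Finset.max'_lt_iff]
    intro y hy
    rw [hS, Finset.mem_insert] at hy
    rcases hy with rfl | hy
    · norm_num
    · obtain ⟨i, hi, rfl⟩ := Finset.mem_image.mp hy
      have hi' := Finset.mem_Icc.mp hi
      have hipos : (0:ℝ) < (i:ℝ) := by exact_mod_cast hi'.1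
      exact Real.rpow_lt_one (hxnonneg i) (hxlt i hi) (inv_pos.mpr hipos)
  have hr_half : (1/2 : ℝ) ≤ r := S.le_max' _ (Finset.mem_insert_self _ _)
  have hr0 : (0:ℝ) ≤ r := le_trans (by norm_num) hr_half
  have hcoefbound : ∀ i, 1 ≤ i → ‖Q.coeff i‖ ≤ r ^ i * ‖Q.coeff 0‖ := by
    intro i hi1
    by_cases hid : i ≤ d
    · have hFi : F i ≤ r := by
        apply S.le_max'
        rw [hS]
        exact Finset.mem_insert_of_mem
          (Finset.mem_image_of_mem F (Finset.mem_Icc.mpr ⟨hi1, hid⟩))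
      have hipos : (0:ℝ) < (i:ℝ) := by exact_mod_cast hi1
      have hxi : x i = (F i) ^ i := by
        rw [hF]
        rw [← Real.rpow_natCast (x i ^ ((i:ℝ)⁻¹)) i, ← Real.rpow_mul (hxnonneg i),
          inv_mul_cancel₀ (ne_of_gt hipos), Real.rpow_one]
      have hxle : x i ≤ r ^ i := by
        rw [hxi]
        exact pow_le_pow_left₀ (Real.rpow_nonneg (hxnonneg i) _) hFi i
      have : ‖Q.coeff i‖ = x i * ‖Q.coeff 0‖ := by
        rw [hx]
        field_simp
      rw [this]
      exact mul_le_mul_of_nonneg_right hxle (norm_nonneg _)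
    · have hz : Q.coeff i = 0 := Polynomial.coeff_eq_zero_of_natDegree_lt (by omega)
      rw [hz, norm_zero]
      positivity
  -- the inverse power series
  have hc : PowerSeries.constantCoeff (Q : PowerSeries k) ≠ 0 := by
    rw [Polynomial.constantCoeff_coe]
    exact hq0
  set B : PowerSeries k := (Q : PowerSeries k)⁻¹ with hB
  set a : ℕ → k := fun n => PowerSeries.coeff n B with ha
  have hmk : PowerSeries.mk a = B := by
    ext n
    rw [PowerSeries.coeff_mk]
  have hmul : (Q : PowerSeries k) * B = 1 := PowerSeries.mul_inv_cancel _ hc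
  refine ⟨a, ?_, by rw [hmk]; exact hmul⟩
  -- the recurrence
  have hrec : ∀ n, 1 ≤ n → Q.coeff 0 * a n =
      -∑ p ∈ (Finset.HasAntidiagonal.antidiagonal n).erase (0, n), Q.coeff p.1 * a p.2 := by
    intro n hn
    have h1 : (PowerSeries.coeff n) ((Q : PowerSeries k) * B) = 0 := by
      rw [hmul, PowerSeries.coeff_one, if_neg (by omega)]
    rw [PowerSeries.coeff_mul] at h1
    have hmem : ((0 : ℕ), n) ∈ Finset.HasAntidiagonal.antidiagonal n := by simp
    rw [← Finset.add_sum_erase _ _ hmem] at h1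
    simp only [Polynomial.coeff_coe] at h1
    exact eq_neg_of_add_eq_zero_left h1
  -- the bound by induction
  have hb : ∀ n, ‖a n‖ ≤ ‖a 0‖ * r ^ n := by
    intro n
    induction n using Nat.strong_induction_on with
    | _ n ih =>
      rcases Nat.eq_zero_or_pos n with rfl | hn
      · simp
      · have h2 := hrec n hn
        have hnorm : ‖Q.coeff 0‖ * ‖a n‖ ≤ ‖Q.coeff 0‖ * (‖a 0‖ * r ^ n) := by
          rw [← norm_mul, h2, norm_neg]
          apply IsUltrametricDist.norm_sum_le_of_forall_le_of_nonneg
          · positivity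
          · rintro ⟨i, j⟩ hij
            rw [Finset.mem_erase, Finset.HasAntidiagonal.mem_antidiagonal] at hij
            have hi1 : 1 ≤ i := by
              rcases Nat.eq_zero_or_pos i with rfl | h
              · exfalso
                have hj : j = n := by omega
                subst hj
                exact hij.1 rfl
              · exact h
            have hjlt : j < n := by omega
            calc ‖Q.coeff i * a j‖ = ‖Q.coeff i‖ * ‖a j‖ := norm_mul _ _
              _ ≤ (r ^ i * ‖Q.coeff 0‖) * (‖a 0‖ * r ^ j) :=
                  mul_le_mul (hcoefbound i hi1) (ih j hjlt) (norm_nonneg _) (by positivity)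
              _ = ‖Q.coeff 0‖ * (‖a 0‖ * r ^ n) := by rw [← hij.2, pow_add]; ring
        exact le_of_mul_le_mul_left hnorm hq0pos
  have hlim : Tendsto (fun n => ‖a 0‖ * r ^ n) atTop (nhds 0) := by
    simpa using (tendsto_pow_atTop_nhds_zero_of_lt_one hr0 hr_lt1).const_mul ‖a 0‖
  exact squeeze_zero (fun n => norm_nonneg _) hb hlim
end

section
/- Let p be a prime and define f: ℤ_p → ℤ_p by f(Σ_{i≥0} x_i p^i) = Σ_{i≥0} x_i p^{2i}, where x_i ∈ {0,…,p−1} are the p-adic digits. Then for all x, y ∈ ℤ_p, |f(x) − f(y)|_p = |x − y|_p². In particular f is continuous. -/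
/-- The `i`-th `p`-adic digit of `x ∈ ℤ_p`. -/
noncomputable def padicDigit {p : ℕ} [Fact p.Prime] (x : ℤ_[p]) (i : ℕ) : ℕ :=
  x.appr (i + 1) / p ^ i

/-- The digit-spreading map `f(Σ x_i p^i) = Σ x_i p^{2i}`. -/
noncomputable def digitSpread {p : ℕ} [Fact p.Prime] (x : ℤ_[p]) : ℤ_[p] :=
  ∑' i : ℕ, (padicDigit x i : ℤ_[p]) * (p : ℤ_[p]) ^ (2 * i)

section Aux

variable {p : ℕ} [hp : Fact p.Prime]

lemma padicDigit_lt (x : ℤ_[p]) (i : ℕ) : padicDigit x i < p := by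
  have h := x.appr_lt (i + 1)
  rw [padicDigit, Nat.div_lt_iff_lt_mul (pow_pos hp.out.pos i)]
  rwa [pow_succ, mul_comm] at h

lemma appr_succ_eq (x : ℤ_[p]) (i : ℕ) :
    x.appr (i + 1) = x.appr i + padicDigit x i * p ^ i := by
  obtain ⟨c, hc⟩ := x.dvd_appr_sub_appr i (i + 1) (Nat.le_succ i)
  have hle := x.appr_mono (Nat.le_succ i)
  have h1 : x.appr (i + 1) = x.appr i + c * p ^ i := by
    have := (Nat.sub_eq_iff_eq_add hle).mp hc
    rw [this]; ring
  have hlt := x.appr_lt i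
  have hd : padicDigit x i = c := by
    rw [padicDigit, h1, Nat.add_mul_div_right _ _ (pow_pos hp.out.pos i),
      Nat.div_eq_of_lt hlt, zero_add]
  rw [hd, h1]

lemma appr_eq_of_sub_mem {x y : ℤ_[p]} {n : ℕ}
    (h : x - y ∈ Ideal.span {(p : ℤ_[p]) ^ n}) : x.appr n = y.appr n := by
  have hx := x.appr_spec n
  have hy := y.appr_spec n
  have hmem : (((x.appr n : ℤ) - (y.appr n : ℤ) : ℤ) : ℤ_[p]) ∈
      Ideal.span {(p : ℤ_[p]) ^ n} := by
    have heq : (((x.appr n : ℤ) - (y.appr n : ℤ) : ℤ) : ℤ_[p]) =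
        (x - y) - (x - (x.appr n : ℤ_[p])) + (y - (y.appr n : ℤ_[p])) := by
      push_cast; ring
    rw [heq]
    exact Ideal.add_mem _ (Ideal.sub_mem _ h hx) hy
  have hnorm : ‖(((x.appr n : ℤ) - (y.appr n : ℤ) : ℤ) : ℤ_[p])‖ ≤ (p : ℝ) ^ (-n : ℤ) :=
    (PadicInt.norm_le_pow_iff_mem_span_pow _ n).mpr hmem
  have hdvd : ((p : ℤ) ^ n : ℤ) ∣ ((x.appr n : ℤ) - (y.appr n : ℤ)) := by
    rwa [PadicInt.norm_int_le_pow_iff_dvd] at hnorm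
  have hz : ((x.appr n : ℤ) - (y.appr n : ℤ)) = 0 := by
    apply Int.eq_zero_of_abs_lt_dvd hdvd
    have h1 : ((x.appr n : ℤ)) < (p : ℤ) ^ n := by exact_mod_cast x.appr_lt n
    have h2 : ((y.appr n : ℤ)) < (p : ℤ) ^ n := by exact_mod_cast y.appr_lt n
    have h3 : (0 : ℤ) ≤ (x.appr n : ℤ) := Int.natCast_nonneg _
    have h4 : (0 : ℤ) ≤ (y.appr n : ℤ) := Int.natCast_nonneg _
    rw [abs_sub_lt_iff]
    omega
  omega

lemma padicDigit_eq_of_sub_mem {x y : ℤ_[p]} {n i : ℕ} (hi : i < n)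
    (h : x - y ∈ Ideal.span {(p : ℤ_[p]) ^ n}) : padicDigit x i = padicDigit y i := by
  have h' : x - y ∈ Ideal.span {(p : ℤ_[p]) ^ (i + 1)} := by
    rw [Ideal.mem_span_singleton] at h ⊢
    exact dvd_trans (pow_dvd_pow _ hi) h
  rw [padicDigit, padicDigit, appr_eq_of_sub_mem h']

lemma norm_term_le (x : ℤ_[p]) (i : ℕ) :
    ‖(padicDigit x i : ℤ_[p]) * (p : ℤ_[p]) ^ (2 * i)‖ ≤ (p : ℝ) ^ (-(2 * i : ℕ) : ℤ) := by
  rw [norm_mul, PadicInt.norm_p_pow]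
  exact mul_le_of_le_one_left (by positivity) (PadicInt.norm_le_one _)

lemma hasSum_digitSpread (x : ℤ_[p]) :
    HasSum (fun i => (padicDigit x i : ℤ_[p]) * (p : ℤ_[p]) ^ (2 * i)) (digitSpread x) := by
  have hsum : Summable (fun i => (padicDigit x i : ℤ_[p]) * (p : ℤ_[p]) ^ (2 * i)) := by
    refine NonarchimedeanAddGroup.summable_of_tendsto_cofinite_zero ?_
    rw [Nat.cofinite_eq_atTop]
    apply squeeze_zero_norm (a := fun i => (((p : ℝ)⁻¹) ^ 2) ^ i)
    · intro i
      refine (norm_term_le x i).trans (le_of_eq ?_)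
      rw [zpow_neg, zpow_natCast, ← pow_mul, inv_pow]
    · apply tendsto_pow_atTop_nhds_zero_of_lt_one (by positivity)
      have h1 : (1 : ℝ) < (p : ℝ) := by exact_mod_cast hp.out.one_lt
      have : (p : ℝ)⁻¹ < 1 := inv_lt_one_of_one_lt₀ h1
      exact pow_lt_one₀ (by positivity) this (by norm_num)
  exact hsum.hasSum

lemma norm_digit_sub_eq_one {a b : ℕ} (ha : a < p) (hb : b < p) (hab : a ≠ b) :
    ‖(((a : ℤ) - (b : ℤ) : ℤ) : ℤ_[p])‖ = 1 := by
  refine le_antisymm (PadicInt.norm_le_one _) ?_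
  by_contra hlt
  push_neg at hlt
  rw [PadicInt.norm_int_lt_one_iff_dvd] at hlt
  have : ((a : ℤ) - b) = 0 := by
    apply Int.eq_zero_of_abs_lt_dvd hlt
    have h1 : ((a : ℤ)) < (p : ℤ) := by exact_mod_cast ha
    have h2 : ((b : ℤ)) < (p : ℤ) := by exact_mod_cast hb
    have h3 : (0 : ℤ) ≤ (a : ℤ) := Int.natCast_nonneg _
    have h4 : (0 : ℤ) ≤ (b : ℤ) := Int.natCast_nonneg _
    rw [abs_sub_lt_iff]
    omega
  omega

lemma norm_digitSpread_sub_eq {x y : ℤ_[p]} {n : ℕ}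
    (hmem : x - y ∈ Ideal.span {(p : ℤ_[p]) ^ n})
    (hdig : padicDigit x n ≠ padicDigit y n) :
    ‖digitSpread x - digitSpread y‖ = (p : ℝ) ^ (-(2 * n : ℕ) : ℤ) := by
  set g : ℕ → ℤ_[p] :=
    fun i => ((padicDigit x i : ℤ_[p]) - (padicDigit y i : ℤ_[p])) * (p : ℤ_[p]) ^ (2 * i)
    with hg
  have hD : HasSum g (digitSpread x - digitSpread y) := by
    have := (hasSum_digitSpread x).sub (hasSum_digitSpread y)
    refine this.congr_fun fun i => by rw [hg]; ring
  have hzero : ∀ i < n, g i = 0 := by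
    intro i hi
    simp only [hg]
    simp [padicDigit_eq_of_sub_mem hi hmem]
  have hgn : ‖g n‖ = (p : ℝ) ^ (-(2 * n : ℕ) : ℤ) := by
    simp only [hg]
    have hcast : ((padicDigit x n : ℤ_[p]) - (padicDigit y n : ℤ_[p])) =
        (((padicDigit x n : ℤ) - (padicDigit y n : ℤ) : ℤ) : ℤ_[p]) := by push_cast; ring
    rw [hcast, norm_mul, PadicInt.norm_p_pow,
      norm_digit_sub_eq_one (padicDigit_lt x n) (padicDigit_lt y n) hdig, one_mul]
  have hT : HasSum (fun i => if i = n then g n else 0) (g n) := hasSum_ite_eq n (g n)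
  have hR : HasSum (fun i => g i - if i = n then g n else 0)
      ((digitSpread x - digitSpread y) - g n) := hD.sub hT
  have hRnorm : ‖(digitSpread x - digitSpread y) - g n‖ ≤ (p : ℝ) ^ (-(2 * (n + 1) : ℕ) : ℤ) := by
    rw [← hR.tsum_eq]
    apply IsUltrametricDist.norm_tsum_le_of_forall_le_of_nonneg (by positivity)
    intro i
    rcases lt_trichotomy i n with hi | rfl | hi
    · simp only [hzero i hi, if_neg hi.ne, sub_zero, norm_zero]
      positivity
    · simp only [eq_self_iff_true, if_true, sub_self, norm_zero]
      have hp0 : (0:ℝ) < (p:ℝ) := by exact_mod_cast hp.out.pos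
      exact zpow_nonneg hp0.le _
    · rw [if_neg hi.ne', sub_zero]
      have h1 : ‖g i‖ ≤ (p : ℝ) ^ (-(2 * i : ℕ) : ℤ) := by
        simp only [hg]
        have hcast : ((padicDigit x i : ℤ_[p]) - (padicDigit y i : ℤ_[p])) =
            (((padicDigit x i : ℤ) - (padicDigit y i : ℤ) : ℤ) : ℤ_[p]) := by push_cast; ring
        rw [hcast, norm_mul, PadicInt.norm_p_pow]
        exact mul_le_of_le_one_left (by positivity) (PadicInt.norm_le_one _)
      refine h1.trans ?_
      apply zpow_le_zpow_right₀ (by exact_mod_cast hp.out.one_le)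
      omega
  have hlt : ‖(digitSpread x - digitSpread y) - g n‖ < ‖g n‖ := by
    refine hRnorm.trans_lt ?_
    rw [hgn]
    apply zpow_lt_zpow_right₀ (by exact_mod_cast hp.out.one_lt)
    omega
  have hrw : digitSpread x - digitSpread y = g n + ((digitSpread x - digitSpread y) - g n) := by
    ring
  rw [hrw, IsUltrametricDist.norm_add_eq_max_of_norm_ne_norm hlt.ne',
    max_eq_left hlt.le, hgn]

end Aux

/-- `|f(x) - f(y)|_p = |x - y|_p²` for all `x, y ∈ ℤ_p`; in
particular `f` is continuous. -/
theorem stmt14 {p : ℕ} [Fact p.Prime] :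
    (∀ x y : ℤ_[p], ‖digitSpread x - digitSpread y‖ = ‖x - y‖ ^ 2) ∧
      Continuous (digitSpread (p := p)) := by
  have hp : Fact p.Prime := inferInstance
  have key : ∀ x y : ℤ_[p], ‖digitSpread x - digitSpread y‖ = ‖x - y‖ ^ 2 := by
    intro x y
    rcases eq_or_ne x y with rfl | hxy
    · simp
    have hsub : x - y ≠ 0 := sub_ne_zero.mpr hxy
    set n := (x - y).valuation with hn
    have hval : ((n : ℤ)) = (x - y).valuation := rfl
    have hnorm : ‖x - y‖ = (p : ℝ) ^ (-(n : ℤ)) := by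
      rw [PadicInt.norm_eq_zpow_neg_valuation hsub, hval]
    have hmem : x - y ∈ Ideal.span {(p : ℤ_[p]) ^ n} :=
      (PadicInt.norm_le_pow_iff_mem_span_pow _ n).mp (le_of_eq hnorm)
    have hne : x.appr (n + 1) ≠ y.appr (n + 1) := by
      intro hEq
      have hmem' : x - y ∈ Ideal.span {(p : ℤ_[p]) ^ (n + 1)} := by
        have hx := x.appr_spec (n + 1)
        have hy := y.appr_spec (n + 1)
        have heq : x - y = (x - (x.appr (n + 1) : ℤ_[p])) - (y - (y.appr (n + 1) : ℤ_[p])) := by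
          rw [hEq]; ring
        rw [heq]
        exact Ideal.sub_mem _ hx hy
      have hle := (PadicInt.norm_le_pow_iff_mem_span_pow _ (n + 1)).mpr hmem'
      rw [hnorm] at hle
      have : (-(n : ℤ)) ≤ (-(n + 1 : ℕ) : ℤ) :=
        (zpow_le_zpow_iff_right₀ (by exact_mod_cast hp.out.one_lt)).mp hle
      omega
    have hdig : padicDigit x n ≠ padicDigit y n := by
      intro hd
      apply hne
      rw [appr_succ_eq, appr_succ_eq, appr_eq_of_sub_mem hmem, hd]
    rw [norm_digitSpread_sub_eq hmem hdig, hnorm, ← zpow_natCast ((p : ℝ) ^ (-(n : ℤ))) 2,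
      ← zpow_mul]
    congr 1
    push_cast
    ring
  refine ⟨key, ?_⟩
  rw [Metric.continuous_iff]
  intro x ε hε
  refine ⟨min 1 ε, lt_min one_pos hε, fun a ha => ?_⟩
  have h1 : dist a x < 1 := lt_of_lt_of_le ha (min_le_left _ _)
  have h2 : dist a x < ε := lt_of_lt_of_le ha (min_le_right _ _)
  have hd : dist (digitSpread a) (digitSpread x) = dist a x ^ 2 := by
    rw [dist_eq_norm, key, dist_eq_norm]
  rw [hd]
  nlinarith [dist_nonneg (x := a) (y := x)]
end
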